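/- Let α, β₁, β₂, γ₁, γ₂ be complex numbers such that γ₁ and γ₂ are not nonpositive integers, and let A, B be real numbers with 1 < B < A < 2B − 1. Then A^{−α} · F₂(α; β₁, β₂; γ₁, γ₂; 1/A, 1 − B/A) = B^{−α} · F₂(α; β₁, γ₂−β₂; γ₁, γ₂; 1/B, 1 − A/B), where A^{−α} and B^{−α} are principal branch powers of the positive reals A and B. (The hypotheses guarantee (1+A−B)/A < 1 and (1+A−B)/B < 1, so both F₂ series converge absolutely.) -/

import Mathlib

open Complex

/-- Pochhammer symbol `(x)_n` in `ℂ`. -/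
noncomputable def cpoch (x : ℂ) (n : ℕ) : ℂ := (ascPochhammer ℂ n).eval x

/-- Appell's hypergeometric series `F₂`. -/
noncomputable def appellF2 (a b₁ b₂ c₁ c₂ z₁ z₂ : ℂ) : ℂ :=
  ∑' p : ℕ × ℕ, cpoch a (p.1 + p.2) * cpoch b₁ p.1 * cpoch b₂ p.2 /
    (cpoch c₁ p.1 * cpoch c₂ p.2 * (p.1.factorial : ℂ) * (p.2.factorial : ℂ)) *
    z₁ ^ p.1 * z₂ ^ p.2

noncomputable def rpoch (x : ℝ) (n : ℕ) : ℝ := (ascPochhammer ℝ n).eval x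

lemma cpoch_zero (x : ℂ) : cpoch x 0 = 1 := by simp [cpoch]
lemma cpoch_succ (x : ℂ) (n : ℕ) : cpoch x (n+1) = cpoch x n * (x + n) := by
  simp [cpoch, ascPochhammer_succ_eval]
lemma cpoch_succ_left (x : ℂ) (n : ℕ) : cpoch x (n+1) = x * cpoch (x+1) n := by
  simp [cpoch, ascPochhammer_succ_left, Polynomial.eval_comp]
lemma cpoch_add (x : ℂ) (m n : ℕ) : cpoch x (m+n) = cpoch x m * cpoch (x + m) n := by
  rw [cpoch, ← ascPochhammer_mul]
  simp [cpoch, Polynomial.eval_comp]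
lemma cpoch_one (n : ℕ) : cpoch 1 n = (n.factorial : ℂ) := by simp [cpoch]
lemma cpoch_ne_zero {x : ℂ} (hx : ∀ k : ℕ, x ≠ -(k:ℂ)) (n : ℕ) : cpoch x n ≠ 0 := by
  intro h
  rw [cpoch, ascPochhammer_eval_eq_zero_iff] at h
  obtain ⟨k, _, hk⟩ := h
  exact hx k (by linear_combination hk)
lemma rpoch_succ (x : ℝ) (n : ℕ) : rpoch x (n+1) = rpoch x n * (x + n) := by
  simp [rpoch, ascPochhammer_succ_eval]
lemma rpoch_zero (x : ℝ) : rpoch x 0 = 1 := by simp [rpoch]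
lemma rpoch_nonneg {x : ℝ} (hx : 0 ≤ x) (n : ℕ) : 0 ≤ rpoch x n := by
  induction n with
  | zero => simp [rpoch]
  | succ n ih => rw [rpoch_succ]; positivity
lemma norm_cpoch_le (x : ℂ) (n : ℕ) : ‖cpoch x n‖ ≤ rpoch ‖x‖ n := by
  induction n with
  | zero => simp [cpoch, rpoch]
  | succ n ih =>
      rw [cpoch_succ, rpoch_succ, norm_mul]
      have h1 : ‖x + (n:ℂ)‖ ≤ ‖x‖ + n := by
        calc ‖x + (n:ℂ)‖ ≤ ‖x‖ + ‖(n:ℂ)‖ := norm_add_le _ _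
        _ = ‖x‖ + n := by simp
      exact mul_le_mul ih h1 (norm_nonneg _) (rpoch_nonneg (norm_nonneg x) n)

lemma geom_bound {u : ℕ → ℝ} (hu : ∀ n, 0 ≤ u n) {q : ℝ} (hq : 0 < q) (N₀ : ℕ)
    (h : ∀ n, N₀ ≤ n → u (n+1) ≤ q * u n) : ∃ C, 0 < C ∧ ∀ n, u n ≤ C * q ^ n := by
  have hsum : 0 ≤ ∑ k ∈ Finset.range (N₀+1), u k / q ^ k :=
    Finset.sum_nonneg fun k _ => div_nonneg (hu k) (by positivity)
  refine ⟨(∑ k ∈ Finset.range (N₀+1), u k / q ^ k) + 1, by linarith, ?_⟩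
  set C : ℝ := (∑ k ∈ Finset.range (N₀+1), u k / q ^ k) + 1 with hC
  have hbase : ∀ n, n ≤ N₀ → u n ≤ C * q ^ n := by
    intro n hn
    have hmem : n ∈ Finset.range (N₀+1) := Finset.mem_range.2 (by omega)
    have h1 : u n / q ^ n ≤ ∑ k ∈ Finset.range (N₀+1), u k / q ^ k :=
      Finset.single_le_sum (fun k _ => div_nonneg (hu k) (by positivity)) hmem
    have h2 : u n / q ^ n ≤ C := by rw [hC]; linarith
    calc u n = (u n / q ^ n) * q ^ n := by field_simp
    _ ≤ C * q ^ n := mul_le_mul_of_nonneg_right h2 (by positivity)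
  intro n
  induction n with
  | zero => exact hbase 0 (Nat.zero_le _)
  | succ n ih =>
      by_cases hn : N₀ ≤ n
      · calc u (n+1) ≤ q * u n := h n hn
        _ ≤ q * (C * q ^ n) := by nlinarith
        _ = C * q ^ (n+1) := by ring
      · exact hbase (n+1) (by omega)

lemma exists_eps {σ : ℝ} (hσ : σ < 1) : ∃ ε : ℝ, 0 < ε ∧ (1+ε)^2 * σ < 1 := by
  rcases le_or_gt σ 0 with h | h
  · exact ⟨1, one_pos, by nlinarith⟩
  · refine ⟨(1-σ)/8, by linarith, by nlinarith [sq_nonneg (1-σ)]⟩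

lemma bound_A {x : ℝ} (hx : 0 ≤ x) {ε : ℝ} (hε : 0 < ε) :
    ∃ C, 0 < C ∧ ∀ n : ℕ, rpoch x n / n.factorial ≤ C * (1+ε)^n := by
  obtain ⟨N₀, hN₀⟩ := exists_nat_ge (x / ε)
  apply geom_bound (fun n => div_nonneg (rpoch_nonneg hx n) (by positivity)) (by linarith) N₀
  intro n hn
  have hfac : ((n+1).factorial : ℝ) = (n.factorial : ℝ) * (n+1) := by
    push_cast [Nat.factorial_succ]; ring
  have hx' : x + n ≤ (1+ε) * (n+1) := by
    have h3 : x / ε ≤ n := le_trans hN₀ (by exact_mod_cast hn)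
    have h4 : x ≤ ε * n := by rw [div_le_iff₀ hε] at h3; linarith
    nlinarith
  have h1 : 0 ≤ rpoch x n := rpoch_nonneg hx n
  have h2 : (0:ℝ) < n.factorial := by positivity
  rw [rpoch_succ, hfac, div_le_iff₀ (by positivity)]
  have hr : (1+ε) * (rpoch x n / n.factorial) * ((n.factorial:ℝ) * (n+1))
      = (1+ε) * rpoch x n * (n+1) := by field_simp
  rw [hr]
  nlinarith

lemma bound_B (b : ℂ) {c : ℂ} (hc : ∀ k : ℕ, c ≠ -(k:ℂ)) {ε : ℝ} (hε : 0 < ε) :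
    ∃ C, 0 < C ∧ ∀ n : ℕ, rpoch ‖b‖ n / ‖cpoch c n‖ ≤ C * (1+ε)^n := by
  have hcn : ∀ n : ℕ, cpoch c n ≠ 0 := cpoch_ne_zero hc
  obtain ⟨N₀, hN₀⟩ := exists_nat_ge ((‖b‖ + (1+ε) * ‖c‖) / ε)
  apply geom_bound (fun n => div_nonneg (rpoch_nonneg (norm_nonneg b) n) (norm_nonneg _))
    (by linarith) N₀
  intro n hn
  have key : ‖b‖ + n ≤ (1+ε) * ‖c + (n:ℂ)‖ := by
    have h3 : (‖b‖ + (1+ε) * ‖c‖) / ε ≤ n := le_trans hN₀ (by exact_mod_cast hn)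
    have h4 : ‖b‖ + (1+ε) * ‖c‖ ≤ ε * n := by rw [div_le_iff₀ hε] at h3; linarith
    have h5 : (n:ℝ) - ‖c‖ ≤ ‖c + (n:ℂ)‖ := by
      have h6 := norm_sub_norm_le (n:ℂ) (-c)
      have h7 : (n:ℂ) - (-c) = c + n := by ring
      rw [h7] at h6
      have hnn : ‖(n:ℂ)‖ = (n:ℝ) := by simp
      have hnc : ‖(-c)‖ = ‖c‖ := norm_neg c
      linarith
    nlinarith
  have hsucc : cpoch c (n+1) = cpoch c n * (c + n) := cpoch_succ c n
  have hpos : 0 < ‖cpoch c n‖ := norm_pos_iff.2 (hcn n)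
  have hpos2 : 0 < ‖c + (n:ℂ)‖ :=
    norm_pos_iff.2 (fun h => hc n (by linear_combination h))
  rw [hsucc, norm_mul, rpoch_succ, div_le_iff₀ (by positivity)]
  have h1 : 0 ≤ rpoch ‖b‖ n := rpoch_nonneg (norm_nonneg b) n
  have hr : (1+ε) * (rpoch ‖b‖ n / ‖cpoch c n‖) *
      (‖cpoch c n‖ * ‖c + (n:ℂ)‖)
      = (1+ε) * rpoch ‖b‖ n * ‖c + (n:ℂ)‖ := by
    rw [mul_assoc ((1:ℝ)+ε), ← mul_assoc (rpoch ‖b‖ n / _),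
      div_mul_cancel₀ _ (ne_of_gt hpos), mul_assoc]
  rw [hr]
  nlinarith

lemma choose_pow_le {x y : ℝ} (hx : 0 ≤ x) (hy : 0 ≤ y) (m n : ℕ) :
    ((m+n).choose m : ℝ) * x^m * y^n ≤ (x+y)^(m+n) := by
  rw [add_pow]
  have hmem : m ∈ Finset.range (m+n+1) := Finset.mem_range.2 (by omega)
  have := Finset.single_le_sum
    (f := fun i => x ^ i * y ^ (m+n-i) * ((m+n).choose i : ℝ))
    (fun i _ => by positivity) hmem
  simpa [Nat.add_sub_cancel_left, mul_comm, mul_assoc, mul_left_comm] using this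

lemma summable_F2term (a b₁ b₂ : ℂ) {c₁ c₂ : ℂ}
    (hc₁ : ∀ k : ℕ, c₁ ≠ -(k:ℂ)) (hc₂ : ∀ k : ℕ, c₂ ≠ -(k:ℂ)) {z₁ z₂ : ℂ}
    (hz : ‖z₁‖ + ‖z₂‖ < 1) :
    Summable (fun p : ℕ × ℕ => cpoch a (p.1 + p.2) * cpoch b₁ p.1 * cpoch b₂ p.2 /
      (cpoch c₁ p.1 * cpoch c₂ p.2 * (p.1.factorial : ℂ) * (p.2.factorial : ℂ)) *
      z₁ ^ p.1 * z₂ ^ p.2) := by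
  obtain ⟨ε, hε, hQ1⟩ := exists_eps hz
  obtain ⟨C₁, hC₁, hA⟩ := bound_A (norm_nonneg a) hε
  obtain ⟨C₂, hC₂, hB₁⟩ := bound_B b₁ hc₁ hε
  obtain ⟨C₃, hC₃, hB₂⟩ := bound_B b₂ hc₂ hε
  set σ : ℝ := ‖z₁‖ + ‖z₂‖ with hσ
  have hσ0 : 0 ≤ σ := by positivity
  set Q : ℝ := (1+ε)^2 * σ with hQdef
  have hQ0 : 0 ≤ Q := by positivity
  have hgs : Summable (fun p : ℕ × ℕ => (C₁*C₂*C₃) * (Q ^ p.1 * Q ^ p.2)) := by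
    apply Summable.mul_left
    exact (summable_geometric_of_lt_one hQ0 hQ1).mul_of_nonneg
      (summable_geometric_of_lt_one hQ0 hQ1)
      (fun m => by positivity) (fun n => by positivity)
  apply Summable.of_norm_bounded hgs
  rintro ⟨m, n⟩
  simp only
  have hD : (0:ℝ) < ‖cpoch c₁ m‖ := norm_pos_iff.2 (cpoch_ne_zero hc₁ m)
  have hE : (0:ℝ) < ‖cpoch c₂ n‖ := norm_pos_iff.2 (cpoch_ne_zero hc₂ n)
  have hfm : (0:ℝ) < m.factorial := by positivity
  have hfn : (0:ℝ) < n.factorial := by positivity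
  have hnorm : ‖cpoch a (m + n) * cpoch b₁ m * cpoch b₂ n /
      (cpoch c₁ m * cpoch c₂ n * (m.factorial : ℂ) * (n.factorial : ℂ)) * z₁ ^ m * z₂ ^ n‖
      = (‖cpoch a (m+n)‖ / (m+n).factorial) * (‖cpoch b₁ m‖ / ‖cpoch c₁ m‖) *
        (‖cpoch b₂ n‖ / ‖cpoch c₂ n‖) *
        (((m+n).factorial : ℝ) / (m.factorial * n.factorial) * (‖z₁‖^m * ‖z₂‖^n)) := by
    simp only [norm_mul, norm_div, norm_pow, Complex.norm_natCast]
    have hfmn : (0:ℝ) < (m+n).factorial := by positivity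
    field_simp
  rw [hnorm]
  have hF1 : ‖cpoch a (m+n)‖ / ((m+n).factorial : ℝ) ≤ C₁ * (1+ε)^(m+n) := by
    refine le_trans ?_ (hA (m+n))
    gcongr
    exact norm_cpoch_le a (m+n)
  have hF2 : ‖cpoch b₁ m‖ / ‖cpoch c₁ m‖ ≤ C₂ * (1+ε)^m := by
    refine le_trans ?_ (hB₁ m)
    gcongr
    exact norm_cpoch_le b₁ m
  have hF3 : ‖cpoch b₂ n‖ / ‖cpoch c₂ n‖ ≤ C₃ * (1+ε)^n := by
    refine le_trans ?_ (hB₂ n)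
    gcongr
    exact norm_cpoch_le b₂ n
  have hF4 : ((m+n).factorial : ℝ) / (m.factorial * n.factorial) * (‖z₁‖^m * ‖z₂‖^n)
      ≤ σ^(m+n) := by
    have hch0 : (m+n).choose m * m.factorial * n.factorial = (m+n).factorial := by
      have h := Nat.add_choose_mul_factorial_mul_factorial m n
      have h2 : (m+n).choose n = (m+n).choose m := by
        simpa [Nat.add_sub_cancel_left] using Nat.choose_symm (Nat.le_add_right m n)
      rw [h2] at h
      linarith [h]
    have hch : ((m+n).factorial : ℝ) = ((m+n).choose m : ℝ) * m.factorial * n.factorial := by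
      exact_mod_cast hch0.symm
    have he : ((m+n).factorial : ℝ) / (m.factorial * n.factorial) * (‖z₁‖^m * ‖z₂‖^n)
        = ((m+n).choose m : ℝ) * ‖z₁‖^m * ‖z₂‖^n := by
      rw [hch]; field_simp
    rw [he, hσ]
    exact choose_pow_le (norm_nonneg z₁) (norm_nonneg z₂) m n
  calc (‖cpoch a (m+n)‖ / (m+n).factorial) * (‖cpoch b₁ m‖ / ‖cpoch c₁ m‖) *
        (‖cpoch b₂ n‖ / ‖cpoch c₂ n‖) *
        (((m+n).factorial : ℝ) / (m.factorial * n.factorial) * (‖z₁‖^m * ‖z₂‖^n))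
      ≤ (C₁ * (1+ε)^(m+n)) * (C₂ * (1+ε)^m) * (C₃ * (1+ε)^n) * σ^(m+n) := by
        have p1 : (0:ℝ) ≤ ‖cpoch a (m+n)‖ / (m+n).factorial := by positivity
        have p2 : (0:ℝ) ≤ ‖cpoch b₁ m‖ / ‖cpoch c₁ m‖ := by positivity
        have p3 : (0:ℝ) ≤ ‖cpoch b₂ n‖ / ‖cpoch c₂ n‖ := by positivity
        have p4 : (0:ℝ) ≤ ((m+n).factorial : ℝ) / (m.factorial * n.factorial) *
          (‖z₁‖^m * ‖z₂‖^n) := by positivity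
        have q1 : (0:ℝ) ≤ C₁ * (1+ε)^(m+n) := by positivity
        have q2 : (0:ℝ) ≤ C₂ * (1+ε)^m := by positivity
        have q3 : (0:ℝ) ≤ C₃ * (1+ε)^n := by positivity
        exact mul_le_mul (mul_le_mul (mul_le_mul hF1 hF2 p2 q1) hF3 p3 (by positivity))
          hF4 p4 (by positivity)
  _ = C₁*C₂*C₃ * (Q^m * Q^n) := by
      have hqq : ((1+ε)^2*σ)^m * ((1+ε)^2*σ)^n
          = (1+ε)^(m+n) * (1+ε)^m * (1+ε)^n * σ^(m+n) := by
        rw [mul_pow, mul_pow, ← pow_mul, ← pow_mul, pow_add, pow_add]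
        ring
      rw [hQdef, hqq]; ring

lemma chu (d : ℂ) : ∀ (n : ℕ) (c : ℂ),
    ∑ k ∈ Finset.range (n+1), (-1:ℂ)^k * (n.choose k : ℂ) * cpoch d k * cpoch (c + k) (n - k)
      = cpoch (c - d) n := by
  intro n
  induction n with
  | zero => intro c; simp [cpoch_zero]
  | succ n ih =>
      intro c
      -- split off k = 0 using sum_range_succ'
      rw [Finset.sum_range_succ']
      simp only [pow_zero, Nat.choose_zero_right, Nat.cast_one, one_mul, cpoch_zero,
        Nat.cast_zero, add_zero, Nat.sub_zero, mul_one]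
      -- now the sum is over k ∈ range (n+1) of f (k+1), plus cpoch c (n+1)
      have step : ∀ k ∈ Finset.range (n+1),
          (-1:ℂ)^(k+1) * ((n+1).choose (k+1) : ℂ) * cpoch d (k+1) * cpoch (c + (k+1 : ℕ)) (n + 1 - (k+1))
          = (-1:ℂ)^(k+1) * ((n.choose (k+1) : ℂ) + (n.choose k : ℂ)) * cpoch d (k+1) *
              cpoch (c + (k+1 : ℕ)) (n - k) := by
        intro k hk
        have : ((n+1).choose (k+1) : ℂ) = (n.choose (k+1) : ℂ) + (n.choose k : ℂ) := by
          rw [Nat.choose_succ_succ]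
          push_cast
          ring
        rw [this, Nat.succ_sub_succ]
      rw [Finset.sum_congr rfl step]
      -- split the sum into two
      have hsplit : ∑ k ∈ Finset.range (n+1),
          (-1:ℂ)^(k+1) * ((n.choose (k+1) : ℂ) + (n.choose k : ℂ)) * cpoch d (k+1) *
            cpoch (c + (k+1 : ℕ)) (n - k)
          = (∑ k ∈ Finset.range (n+1), (-1:ℂ)^(k+1) * (n.choose (k+1) : ℂ) * cpoch d (k+1) *
              cpoch (c + (k+1 : ℕ)) (n - k))
          + ∑ k ∈ Finset.range (n+1), (-1:ℂ)^(k+1) * (n.choose k : ℂ) * cpoch d (k+1) *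
              cpoch (c + (k+1 : ℕ)) (n - k) := by
        rw [← Finset.sum_add_distrib]
        apply Finset.sum_congr rfl
        intro k _
        ring
      rw [hsplit]
      have claimA : (∑ k ∈ Finset.range (n+1), (-1:ℂ)^(k+1) * (n.choose (k+1) : ℂ) *
            cpoch d (k+1) * cpoch (c + (k+1 : ℕ)) (n - k)) + cpoch c (n+1)
          = ∑ k ∈ Finset.range (n+1),
              (-1:ℂ)^k * (n.choose k : ℂ) * cpoch d k * cpoch (c + k) (n + 1 - k) := by
        have e1 : ∑ k ∈ Finset.range (n+2),
            (-1:ℂ)^k * (n.choose k : ℂ) * cpoch d k * cpoch (c + k) (n + 1 - k)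
            = (∑ k ∈ Finset.range (n+1),
              (-1:ℂ)^(k+1) * (n.choose (k+1) : ℂ) * cpoch d (k+1) *
                cpoch (c + (k+1 : ℕ)) (n + 1 - (k+1))) +
              (-1:ℂ)^0 * (n.choose 0 : ℂ) * cpoch d 0 * cpoch (c + (0:ℕ)) (n + 1 - 0) :=
          Finset.sum_range_succ' _ (n+1)
        have e2 : ∑ k ∈ Finset.range (n+2),
            (-1:ℂ)^k * (n.choose k : ℂ) * cpoch d k * cpoch (c + k) (n + 1 - k)
            = (∑ k ∈ Finset.range (n+1),
              (-1:ℂ)^k * (n.choose k : ℂ) * cpoch d k * cpoch (c + k) (n + 1 - k)) +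
              (-1:ℂ)^(n+1) * (n.choose (n+1) : ℂ) * cpoch d (n+1) *
                cpoch (c + (n+1 : ℕ)) (n + 1 - (n+1)) :=
          Finset.sum_range_succ _ (n+1)
        rw [Nat.choose_succ_self] at e2
        simp only [Nat.cast_zero, mul_zero, zero_mul, add_zero, Nat.choose_zero_right,
          Nat.cast_one, pow_zero, one_mul, cpoch_zero, mul_one, Nat.sub_zero] at e1 e2
        have e3 : ∀ k ∈ Finset.range (n+1), (-1:ℂ)^(k+1) * (n.choose (k+1) : ℂ) *
            cpoch d (k+1) * cpoch (c + (k+1 : ℕ)) (n + 1 - (k+1))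
            = (-1:ℂ)^(k+1) * (n.choose (k+1) : ℂ) * cpoch d (k+1) *
                cpoch (c + (k+1 : ℕ)) (n - k) := by
          intro k _
          rw [Nat.succ_sub_succ]
        rw [Finset.sum_congr rfl e3] at e1
        rw [e1] at e2
        linear_combination e2
      rw [add_assoc, add_comm (∑ k ∈ Finset.range (n+1), (-1:ℂ)^(k+1) * (n.choose k : ℂ) *
          cpoch d (k+1) * cpoch (c + (k+1 : ℕ)) (n - k)) (cpoch c (n+1)), ← add_assoc, claimA]
      -- now combine the two sums
      have combine : (∑ k ∈ Finset.range (n+1),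
            (-1:ℂ)^k * (n.choose k : ℂ) * cpoch d k * cpoch (c + k) (n + 1 - k)) +
          ∑ k ∈ Finset.range (n+1), (-1:ℂ)^(k+1) * (n.choose k : ℂ) * cpoch d (k+1) *
            cpoch (c + (k+1 : ℕ)) (n - k)
          = (c - d) * ∑ k ∈ Finset.range (n+1),
              (-1:ℂ)^k * (n.choose k : ℂ) * cpoch d k * cpoch ((c+1) + k) (n - k) := by
        rw [Finset.mul_sum, ← Finset.sum_add_distrib]
        apply Finset.sum_congr rfl
        intro k hk
        have hkn : k ≤ n := by
          have := Finset.mem_range.1 hk; omega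
        have h1 : n + 1 - k = (n - k) + 1 := by omega
        have h2 : cpoch (c + k) ((n-k)+1) = (c + k) * cpoch (c + k + 1) (n - k) :=
          cpoch_succ_left _ _
        have h3 : cpoch d (k+1) = cpoch d k * (d + k) := cpoch_succ d k
        have h4 : ((k+1 : ℕ) : ℂ) = (k : ℂ) + 1 := by push_cast; ring
        rw [h1, h2, h3, h4]
        have h5 : c + ((k:ℂ) + 1) = c + k + 1 := by ring
        rw [h5]
        have h6 : c + 1 + k = c + k + 1 := by ring
        rw [h6]
        ring
      rw [combine, ih (c+1)]
      have : c + 1 - d = (c - d) + 1 := by ring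
      rw [this, ← cpoch_succ_left]

/-- master geometric-domination summability -/
lemma summable_master (z : ℂ) {r : ℝ} (hr0 : 0 ≤ r) (hr1 : r < 1) :
    Summable (fun j : ℕ => ‖cpoch z j‖ / j.factorial * ((j:ℝ)+1) * r^j) := by
  obtain ⟨ε, hε, hQ⟩ := exists_eps hr1
  obtain ⟨C₁, hC₁, hA⟩ := bound_A (norm_nonneg z) hε
  obtain ⟨N₀, hN₀⟩ := exists_nat_ge (1/ε)
  have hjb : ∃ C, 0 < C ∧ ∀ j : ℕ, ((j:ℝ)+1) ≤ C * (1+ε)^j := by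
    apply geom_bound (fun j => by positivity) (by linarith) N₀
    intro j hj
    have h1 : 1/ε ≤ (j:ℝ) := le_trans hN₀ (by exact_mod_cast hj)
    have h2 : 1 ≤ ε * j := by rw [div_le_iff₀ hε] at h1; linarith
    push_cast
    nlinarith [Nat.cast_nonneg (α := ℝ) j]
  obtain ⟨C₂, hC₂, hJ⟩ := hjb
  apply Summable.of_nonneg_of_le (fun j => by positivity)
    (f := fun j => (C₁*C₂) * ((1+ε)^2*r)^j)
  · intro j
    have e : ((1+ε)^2*r)^j = ((1+ε)^j * (1+ε)^j) * r^j := by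
      rw [mul_pow, ← pow_mul]
      ring_nf
    rw [e]
    have h1 : ‖cpoch z j‖ / j.factorial ≤ C₁ * (1+ε)^j :=
      le_trans (by gcongr; exact norm_cpoch_le z j) (hA j)
    have h2 : ((j:ℝ)+1) ≤ C₂ * (1+ε)^j := hJ j
    calc ‖cpoch z j‖ / j.factorial * ((j:ℝ)+1) * r^j
        ≤ (C₁ * (1+ε)^j) * (C₂ * (1+ε)^j) * r^j := by
          apply mul_le_mul_of_nonneg_right _ (by positivity)
          exact mul_le_mul h1 h2 (by positivity) (by positivity)
    _ = C₁*C₂ * ((1+ε)^j * (1+ε)^j * r^j) := by ring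
  · exact ((summable_geometric_of_lt_one (by positivity) hQ).mul_left _)

lemma hasSum_binomial (z : ℂ) {t : ℝ} (ht0 : 0 ≤ t) (ht1 : t < 1) :
    HasSum (fun j : ℕ => cpoch z j / (j.factorial : ℂ) * (t:ℂ)^j) ((1 - (t:ℂ)) ^ (-z)) := by
  set r : ℝ := (1+t)/2 with hrdef
  have hr0 : 0 < r := by rw [hrdef]; linarith
  have hrt : t < r := by rw [hrdef]; linarith
  have hr1 : r < 1 := by rw [hrdef]; linarith
  set c : ℕ → ℂ := fun j => cpoch z j / (j.factorial : ℂ) with hc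
  set g : ℕ → ℝ → ℂ := fun j x => c j * (x:ℂ)^j with hg
  set g' : ℕ → ℝ → ℂ := fun j x => c j * j * (x:ℂ)^(j-1) with hg'
  set u : ℕ → ℝ := fun j => ‖c j‖ * j * r^(j-1) with hu
  have hnc : ∀ j, ‖c j‖ ≤ ‖cpoch z j‖ / j.factorial := by
    intro j
    rw [hc]
    simp only [norm_div, Complex.norm_natCast]
    exact le_refl _
  have hmaster := summable_master z hr0.le hr1
  have husum : Summable u := by
    apply Summable.of_nonneg_of_le (fun j => by positivity)
      (f := fun j => (‖cpoch z j‖ / j.factorial * ((j:ℝ)+1) * r^j) / r)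
    · intro j
      rw [hu]
      match j with
      | 0 => simp; positivity
      | (j+1) =>
        simp only [Nat.add_sub_cancel]
        rw [le_div_iff₀ hr0]
        have : ‖c (j+1)‖ * ((j:ℝ)+1) * r^j * r = ‖c (j+1)‖ * ((j:ℝ)+1) * (r^j * r) := by ring
        push_cast
        calc ‖c (j+1)‖ * ((j:ℝ)+1) * r ^ j * r
            = ‖c (j+1)‖ * ((j:ℝ)+1) * (r^(j+1)) := by rw [pow_succ]; ring
        _ ≤ ‖cpoch z (j+1)‖ / (j+1).factorial * ((j:ℝ)+1+1) * r^(j+1) := by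
            apply mul_le_mul_of_nonneg_right _ (by positivity)
            apply mul_le_mul (hnc (j+1)) (by linarith) (by positivity)
            positivity
    · exact hmaster.div_const r
  have hptsum : ∀ x : ℝ, |x| ≤ r → Summable (fun j => g j x) := by
    intro x hx
    apply Summable.of_norm_bounded hmaster
    intro j
    rw [hg]
    simp only [norm_mul, norm_pow, Complex.norm_real, Real.norm_eq_abs]
    calc ‖c j‖ * |x|^j ≤ (‖cpoch z j‖ / j.factorial) * r^j := by
          apply mul_le_mul (hnc j) (by exact pow_le_pow_left₀ (abs_nonneg x) hx j)
            (by positivity) (by positivity)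
    _ ≤ ‖cpoch z j‖ / j.factorial * ((j:ℝ)+1) * r^j := by
          have hA : (0:ℝ) ≤ ‖cpoch z j‖ / j.factorial := by positivity
          have hrj : (0:ℝ) ≤ r^j := by positivity
          nlinarith [mul_nonneg (mul_nonneg hA (Nat.cast_nonneg (α := ℝ) j)) hrj]
  have hopen : IsOpen (Set.Ioo (-r) r) := isOpen_Ioo
  have hpre : IsPreconnected (Set.Ioo (-r:ℝ) r) := isPreconnected_Ioo
  have h0mem : (0:ℝ) ∈ Set.Ioo (-r) r := ⟨by linarith, hr0⟩
  have hgderiv : ∀ (j : ℕ) (x : ℝ), x ∈ Set.Ioo (-r) r → HasDerivAt (g j) (g' j x) x := by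
    intro j x _
    have h1 : HasDerivAt (fun w : ℂ => w ^ j) ((j:ℂ) * (x:ℂ)^(j-1)) (x:ℂ) := hasDerivAt_pow j _
    have h3 := (h1.comp_ofReal).const_mul (c j)
    have he : g' j x = c j * ((j:ℂ) * (x:ℂ)^(j-1)) := by rw [hg']; ring
    rw [he]
    exact h3
  have hgbound : ∀ (j : ℕ) (x : ℝ), x ∈ Set.Ioo (-r) r → ‖g' j x‖ ≤ u j := by
    intro j x hx
    have hxr : |x| ≤ r := by
      rw [abs_le]; exact ⟨hx.1.le, hx.2.le⟩
    rw [hg', hu]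
    simp only [norm_mul, norm_pow, Complex.norm_real, Real.norm_eq_abs, Complex.norm_natCast]
    gcongr
  have hg0sum : Summable (fun j => g j 0) := hptsum 0 (by simp [hr0.le])
  have Hf : ∀ x ∈ Set.Ioo (-r) r, HasDerivAt (fun y => ∑' j, g j y) (∑' j, g' j x) x :=
    fun x hx => hasDerivAt_tsum_of_isPreconnected husum hopen hpre hgderiv hgbound h0mem hg0sum hx
  set f : ℝ → ℂ := fun y => ∑' j, g j y with hf
  have key : ∀ x : ℝ, |x| ≤ r → (1 - (x:ℂ)) * (∑' j, g' j x) = z * f x := by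
    intro x hx
    have hS : Summable (fun j => g' j x) := by
      apply Summable.of_norm_bounded husum
      intro j
      rw [hg', hu]
      simp only [norm_mul, norm_pow, Complex.norm_real, Real.norm_eq_abs, Complex.norm_natCast]
      gcongr
    have hfx : Summable (fun j => g j x) := hptsum x hx
    have hcc : ∀ j : ℕ, c (j+1) * ((j:ℂ)+1) = c j * (z + j) := by
      intro j
      rw [hc]
      simp only
      rw [cpoch_succ]
      have hfac : (((j+1).factorial : ℕ) : ℂ) = ((j:ℂ)+1) * (j.factorial : ℂ) := by
        push_cast [Nat.factorial_succ]
        ring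
      rw [hfac]
      have h1 : ((j.factorial : ℕ) : ℂ) ≠ 0 := Nat.cast_ne_zero.2 (Nat.factorial_ne_zero j)
      have h2 : ((j:ℂ)+1) ≠ 0 := by
        intro hcon
        have := congrArg Complex.re hcon
        simp at this
        have := Nat.cast_nonneg (α := ℝ) j
        linarith
      field_simp
    have hSA : Summable (fun j => c (j+1) * ((j:ℂ)+1) * (x:ℂ)^j) := by
      apply ((summable_nat_add_iff 1).mpr hS).congr
      intro j
      rw [hg']
      simp only [Nat.add_sub_cancel]
      push_cast
      ring
    have hSB : Summable (fun j => (c j * j) * (x:ℂ)^j) := by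
      apply (hS.mul_left (x:ℂ)).congr
      intro j
      rw [hg']
      match j with
      | 0 => simp
      | (j+1) =>
        simp only [Nat.add_sub_cancel]
        push_cast
        ring
    have e0 : ∑' j, g' j x = ∑' j, c (j+1) * ((j:ℂ)+1) * (x:ℂ)^j := by
      rw [Summable.tsum_eq_zero_add hS]
      have hz0 : g' 0 x = 0 := by rw [hg']; simp
      rw [hz0, zero_add]
      exact tsum_congr (fun j => by
        rw [hg']; simp only [Nat.add_sub_cancel]; push_cast; ring)
    have e1 : (x:ℂ) * ∑' j, g' j x = ∑' j, (c j * j) * (x:ℂ)^j := by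
      rw [← tsum_mul_left]
      exact tsum_congr (fun j => by
        rw [hg']
        match j with
        | 0 => simp
        | (j+1) => simp only [Nat.add_sub_cancel]; push_cast; ring)
    have e2 : z * f x = ∑' j, (z * c j) * (x:ℂ)^j := by
      rw [hf, ← tsum_mul_left]
      exact tsum_congr (fun j => by rw [hg]; ring)
    calc (1 - (x:ℂ)) * ∑' j, g' j x
        = ∑' j, g' j x - (x:ℂ) * ∑' j, g' j x := by ring
    _ = (∑' j, c (j+1) * ((j:ℂ)+1) * (x:ℂ)^j) - ∑' j, (c j * j) * (x:ℂ)^j := by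
        rw [e1, e0]
    _ = ∑' j, (c (j+1) * ((j:ℂ)+1) * (x:ℂ)^j - (c j * j) * (x:ℂ)^j) := (Summable.tsum_sub hSA hSB).symm
    _ = ∑' j, (z * c j) * (x:ℂ)^j := by
        exact tsum_congr (fun j => by linear_combination ((x:ℂ)^j) * hcc j)
    _ = z * f x := e2.symm
  set E : ℝ → ℂ := fun x => (1 - (x:ℂ)) ^ z with hE
  have hEderiv : ∀ x ∈ Set.Ioo (-r) r, HasDerivAt E (z * (1 - (x:ℂ))^(z-1) * (-1)) x := by
    intro x hx
    have hbase : HasDerivAt (fun w : ℂ => 1 - w) (-1) (x:ℂ) := by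
      simpa using (hasDerivAt_id (x:ℂ)).const_sub 1
    have hslit : (1 - (x:ℂ)) ∈ Complex.slitPlane := by
      apply Or.inl
      simp only [Complex.sub_re, Complex.one_re, Complex.ofReal_re]
      linarith [hx.2]
    exact (hbase.cpow_const hslit).comp_ofReal
  have hne1 : ∀ x : ℝ, x < 1 → (1 - (x:ℂ)) ≠ 0 := by
    intro x hx hcon
    have := congrArg Complex.re hcon
    simp at this
    linarith
  have hhderiv : ∀ x ∈ Set.Ioo (-r) r, HasDerivAt (fun y => f y * E y) 0 x := by
    intro x hx
    have h1 := (Hf x hx).mul (hEderiv x hx)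
    refine h1.congr_deriv ?_
    have hxr : |x| ≤ r := by rw [abs_le]; exact ⟨hx.1.le, hx.2.le⟩
    have hk := key x hxr
    have hne : (1 - (x:ℂ)) ≠ 0 := hne1 x (lt_trans hx.2 hr1)
    have hcp : (1 - (x:ℂ))^(z-1) = (1 - (x:ℂ))^z / (1 - (x:ℂ)) := by
      rw [Complex.cpow_sub _ _ hne, Complex.cpow_one]
    rw [hE]
    simp only
    rw [hcp]
    have hS' : (∑' j, g' j x) = z * f x / (1 - (x:ℂ)) := by
      rw [← hk]
      field_simp
    rw [hS']
    field_simp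
    ring
  have hconst : f t * E t = f 0 * E 0 := by
    have hsub : Set.Icc (0:ℝ) t ⊆ Set.Ioo (-r) r := by
      intro x hx
      exact ⟨by linarith [hx.1], by linarith [hx.2]⟩
    have hcont : ContinuousOn (fun y => f y * E y) (Set.Icc 0 t) := by
      intro x hx
      exact ((hhderiv x (hsub hx)).continuousAt).continuousWithinAt
    have hder : ∀ x ∈ Set.Ico 0 t, HasDerivWithinAt (fun y => f y * E y) 0 (Set.Ici x) x := by
      intro x hx
      have hxmem : x ∈ Set.Ioo (-r) r := ⟨by linarith [hx.1], by linarith [hx.2]⟩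
      exact (hhderiv x hxmem).hasDerivWithinAt
    exact constant_of_has_deriv_right_zero hcont hder t ⟨ht0, le_refl t⟩
  have hf0 : f 0 = 1 := by
    rw [hf]
    simp only
    rw [tsum_eq_single 0 (fun j hj => by
      rw [hg]
      simp only [Complex.ofReal_zero]
      rw [zero_pow hj, mul_zero])]
    rw [hg, hc]
    simp [cpoch_zero]
  have hE0 : E 0 = 1 := by
    rw [hE]
    simp only [Complex.ofReal_zero, sub_zero, Complex.one_cpow]
  have hEt : E t ≠ 0 := by
    rw [hE]
    simp only
    intro hcon
    rcases (Complex.cpow_eq_zero_iff _ _).1 hcon with ⟨h1, _⟩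
    exact hne1 t ht1 h1
  have hft : f t = (1 - (t:ℂ))^(-z) := by
    have h1 : f t * E t = 1 := by rw [hconst, hf0, hE0, one_mul]
    have h2 : f t = (E t)⁻¹ := eq_inv_of_mul_eq_one_left h1
    rw [h2, hE, Complex.cpow_neg]
  have hsum := (hptsum t (by rw [_root_.abs_of_nonneg ht0]; exact hrt.le)).hasSum
  rw [show (∑' j, g j t) = f t from rfl, hft] at hsum
  exact hsum

lemma one_not_neg_nat : ∀ k : ℕ, (1:ℂ) ≠ -(k:ℂ) := by
  intro k h
  have := congrArg Complex.re h
  simp at this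
  have h2 : (0:ℝ) ≤ (k:ℝ) := Nat.cast_nonneg k
  linarith

lemma tsum_prod_diag {f : ℕ × ℕ → ℂ} (hf : Summable f) :
    ∑' p : ℕ × ℕ, f p = ∑' n : ℕ, ∑ kl ∈ Finset.HasAntidiagonal.antidiagonal n, f kl := by
  calc ∑' p : ℕ × ℕ, f p
      = ∑' s : Σ n : ℕ, Finset.HasAntidiagonal.antidiagonal n, f (Finset.HasAntidiagonal.sigmaAntidiagonalEquivProd s) :=
        (Finset.HasAntidiagonal.sigmaAntidiagonalEquivProd.tsum_eq f).symm
  _ = ∑' n : ℕ, ∑' kl : Finset.HasAntidiagonal.antidiagonal n, f (Finset.HasAntidiagonal.sigmaAntidiagonalEquivProd ⟨n, kl⟩) :=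
        Summable.tsum_sigma (Finset.HasAntidiagonal.sigmaAntidiagonalEquivProd.summable_iff.2 hf)
  _ = ∑' n : ℕ, ∑ kl ∈ Finset.HasAntidiagonal.antidiagonal n, f kl := by
        refine tsum_congr fun n => ?_
        rw [tsum_fintype]
        exact Finset.sum_coe_sort (Finset.HasAntidiagonal.antidiagonal n) f

lemma pfaff (a b : ℂ) {co : ℂ} (hc : ∀ k : ℕ, co ≠ -(k:ℂ)) {t : ℝ}
    (ht0 : 0 ≤ t) (ht : 2*t < 1) :
    ∑' n : ℕ, cpoch a n * cpoch b n / (cpoch co n * (n.factorial : ℂ)) * (t:ℂ)^n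
    = (1 - (t:ℂ))^(-a) * ∑' k : ℕ, cpoch a k * cpoch (co - b) k /
        (cpoch co k * (k.factorial : ℂ)) * ((t/(t-1) : ℝ) : ℂ)^k := by
  have ht1 : t < 1 := by linarith
  set T : ℕ × ℕ → ℂ := fun p => cpoch a (p.1 + p.2) * cpoch (co - b) p.1 /
    (cpoch co p.1 * (p.1.factorial : ℂ) * (p.2.factorial : ℂ)) * (-(t:ℂ))^p.1 * (t:ℂ)^p.2
    with hT
  have hnz : ∀ p : ℕ × ℕ, (cpoch co p.1 * (p.1.factorial : ℂ) * (p.2.factorial : ℂ)) ≠ 0 := by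
    intro p
    have h1 := cpoch_ne_zero hc p.1
    have h2 : ((p.1.factorial : ℕ) : ℂ) ≠ 0 := Nat.cast_ne_zero.2 (Nat.factorial_ne_zero _)
    have h3 : ((p.2.factorial : ℕ) : ℂ) ≠ 0 := Nat.cast_ne_zero.2 (Nat.factorial_ne_zero _)
    exact mul_ne_zero (mul_ne_zero h1 h2) h3
  have ST : Summable T := by
    have hz : ‖-(t:ℂ)‖ + ‖(t:ℂ)‖ < 1 := by
      rw [norm_neg]
      simp only [Complex.norm_real, Real.norm_eq_abs, _root_.abs_of_nonneg ht0]
      linarith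
    apply (summable_F2term a (co - b) 1 hc one_not_neg_nat hz).congr
    rintro ⟨k, j⟩
    rw [hT]
    simp only
    rw [cpoch_one]
    have h1 := cpoch_ne_zero hc k
    have h2 : ((k.factorial : ℕ) : ℂ) ≠ 0 := Nat.cast_ne_zero.2 (Nat.factorial_ne_zero _)
    have h3 : ((j.factorial : ℕ) : ℂ) ≠ 0 := Nat.cast_ne_zero.2 (Nat.factorial_ne_zero _)
    field_simp
  -- diagonal evaluation = LHS
  have hdiag : ∑' p : ℕ × ℕ, T p
      = ∑' n : ℕ, cpoch a n * cpoch b n / (cpoch co n * (n.factorial : ℂ)) * (t:ℂ)^n := by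
    rw [tsum_prod_diag ST]
    apply tsum_congr
    intro n
    rw [Finset.Nat.sum_antidiagonal_eq_sum_range_succ_mk]
    have hterm : ∀ k ∈ Finset.range (n+1), T (k, n - k)
        = cpoch a n * (t:ℂ)^n / (cpoch co n * (n.factorial : ℂ)) *
          ((-1:ℂ)^k * (n.choose k : ℂ) * cpoch (co - b) k * cpoch (co + k) (n - k)) := by
      intro k hk
      have hkn : k ≤ n := by have := Finset.mem_range.1 hk; omega
      rw [hT]
      simp only
      have e1 : k + (n - k) = n := by omega
      rw [e1]
      have e2 : cpoch co n = cpoch co k * cpoch (co + k) (n - k) := by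
        rw [← cpoch_add]
        rw [e1]
      have e3 : ((n.factorial : ℕ) : ℂ) = (n.choose k : ℂ) * (k.factorial : ℂ) *
          ((n-k).factorial : ℂ) := by
        exact_mod_cast congrArg (Nat.cast (R := ℂ)) (Nat.choose_mul_factorial_mul_factorial hkn).symm
      have e4 : (-(t:ℂ))^k = (-1:ℂ)^k * (t:ℂ)^k := by
        rw [neg_pow]
      have e5 : (t:ℂ)^k * (t:ℂ)^(n-k) = (t:ℂ)^n := by
        rw [← pow_add, e1]
      have h1 := cpoch_ne_zero hc k
      have h4 := cpoch_ne_zero hc n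
      have h2 : ((k.factorial : ℕ) : ℂ) ≠ 0 := Nat.cast_ne_zero.2 (Nat.factorial_ne_zero _)
      have h3 : (((n-k).factorial : ℕ) : ℂ) ≠ 0 := Nat.cast_ne_zero.2 (Nat.factorial_ne_zero _)
      have h5 : ((n.factorial : ℕ) : ℂ) ≠ 0 := Nat.cast_ne_zero.2 (Nat.factorial_ne_zero _)
      have h6 : cpoch (co + k) (n - k) ≠ 0 := by
        intro hcon
        rw [e2, hcon, mul_zero] at h4
        exact h4 rfl
      rw [e4]
      field_simp
      rw [e2, e3, ← e5]
      ring
    rw [Finset.sum_congr rfl hterm, ← Finset.mul_sum]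
    have := chu (co - b) n co
    have e6 : co - (co - b) = b := by ring
    rw [e6] at this
    rw [this]
    have h4 := cpoch_ne_zero hc n
    have h5 : ((n.factorial : ℕ) : ℂ) ≠ 0 := Nat.cast_ne_zero.2 (Nat.factorial_ne_zero _)
    field_simp
  -- iterated evaluation = RHS
  have hiter : ∑' p : ℕ × ℕ, T p
      = (1 - (t:ℂ))^(-a) * ∑' k : ℕ, cpoch a k * cpoch (co - b) k /
          (cpoch co k * (k.factorial : ℂ)) * ((t/(t-1) : ℝ) : ℂ)^k := by
    rw [Summable.tsum_prod ST]
    rw [← tsum_mul_left]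
    apply tsum_congr
    intro k
    -- inner sum over j
    have hbin := hasSum_binomial (a + k) ht0 ht1
    have hinner : ∑' j : ℕ, T (k, j)
        = (cpoch a k * cpoch (co - b) k / (cpoch co k * (k.factorial : ℂ)) * (-(t:ℂ))^k) *
            ((1 - (t:ℂ)) ^ (-(a + (k:ℂ)))) := by
      rw [← hbin.tsum_eq, ← tsum_mul_left]
      apply tsum_congr
      intro j
      rw [hT]
      simp only
      rw [cpoch_add]
      have h2 : ((j.factorial : ℕ) : ℂ) ≠ 0 := Nat.cast_ne_zero.2 (Nat.factorial_ne_zero _)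
      have h1 := cpoch_ne_zero hc k
      have h3 : ((k.factorial : ℕ) : ℂ) ≠ 0 := Nat.cast_ne_zero.2 (Nat.factorial_ne_zero _)
      field_simp
    rw [hinner]
    -- now the cpow algebra
    have hne : (1 - (t:ℂ)) ≠ 0 := by
      intro hcon
      have := congrArg Complex.re hcon
      simp at this
      linarith
    have hsplit : (1 - (t:ℂ)) ^ (-(a + (k:ℂ)))
        = (1 - (t:ℂ)) ^ (-a) * ((1 - (t:ℂ)) ^ k)⁻¹ := by
      have : -(a + (k:ℂ)) = -a + -(k:ℂ) := by ring
      rw [this, Complex.cpow_add _ _ hne]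
      congr 1
      rw [Complex.cpow_neg, Complex.cpow_natCast]
    have hfrac : ((t/(t-1) : ℝ) : ℂ)^k = (-(t:ℂ))^k * ((1 - (t:ℂ)) ^ k)⁻¹ := by
      have ht1' : (t:ℝ) - 1 ≠ 0 := by linarith
      have e : ((t/(t-1) : ℝ) : ℂ) = -(t:ℂ) / (1 - (t:ℂ)) := by
        push_cast
        rw [div_eq_div_iff (by exact_mod_cast Complex.ofReal_ne_zero.2 ht1') ?_]
        · ring
        · exact hne
      rw [e, div_pow, div_eq_mul_inv]
    rw [hsplit, hfrac]
    ring
  rw [← hdiag, hiter]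

lemma cpow_fact {A B : ℝ} (hA : 0 < A) (hB : 0 < B) (w : ℂ) (m : ℕ) :
    (A:ℂ)^(-w) * ((1/A : ℝ):ℂ)^m * (((B/A : ℝ)):ℂ)^(-(w + m)) = (B:ℂ)^(-w) * ((1/B : ℝ):ℂ)^m := by
  have hAne : (A:ℂ) ≠ 0 := Complex.ofReal_ne_zero.2 hA.ne'
  have hBne : (B:ℂ) ≠ 0 := Complex.ofReal_ne_zero.2 hB.ne'
  have h1 : ((B/A : ℝ):ℂ)^(-(w+(m:ℂ))) = (B:ℂ)^(-(w+(m:ℂ))) * ((A:ℂ)^(-(w+(m:ℂ))))⁻¹ := by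
    have e : ((B/A : ℝ):ℂ) = (((B:ℝ)):ℂ) * (((A⁻¹:ℝ)):ℂ) := by
      rw [← Complex.ofReal_mul, ← div_eq_mul_inv]
    rw [e, Complex.mul_cpow_ofReal_nonneg hB.le (inv_nonneg.2 hA.le)]
    congr 1
    rw [Complex.ofReal_inv, Complex.inv_cpow]
    rw [Complex.arg_ofReal_of_nonneg hA.le]
    exact Ne.symm Real.pi_ne_zero
  have hsplitA : (A:ℂ)^(-(w+(m:ℂ))) = (A:ℂ)^(-w) * ((A:ℂ)^m)⁻¹ := by
    rw [show -(w+(m:ℂ)) = -w + -(m:ℂ) by ring, Complex.cpow_add _ _ hAne]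
    congr 1
    rw [Complex.cpow_neg, Complex.cpow_natCast]
  have hsplitB : (B:ℂ)^(-(w+(m:ℂ))) = (B:ℂ)^(-w) * ((B:ℂ)^m)⁻¹ := by
    rw [show -(w+(m:ℂ)) = -w + -(m:ℂ) by ring, Complex.cpow_add _ _ hBne]
    congr 1
    rw [Complex.cpow_neg, Complex.cpow_natCast]
  have hxA : ((1/A : ℝ):ℂ)^m = ((A:ℂ)^m)⁻¹ := by
    push_cast
    rw [one_div, inv_pow]
  have hxB : ((1/B : ℝ):ℂ)^m = ((B:ℂ)^m)⁻¹ := by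
    push_cast
    rw [one_div, inv_pow]
  have hApw : (A:ℂ)^(-w) ≠ 0 := fun h => hAne ((Complex.cpow_eq_zero_iff _ _).1 h).1
  have hBpw : (B:ℂ)^(-w) ≠ 0 := fun h => hBne ((Complex.cpow_eq_zero_iff _ _).1 h).1
  have hApm : ((A:ℂ)^m) ≠ 0 := pow_ne_zero m hAne
  have hBpm : ((B:ℂ)^m) ≠ 0 := pow_ne_zero m hBne
  rw [h1, hsplitA, hsplitB, hxA, hxB]
  field_simp

/-- Linear transformation for Appell's `F₂` induced by `(A,B) ↦ (B,A)`. -/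
theorem statement2 (α β₁ β₂ γ₁ γ₂ : ℂ) (A B : ℝ)
    (hγ₁ : ∀ n : ℕ, γ₁ ≠ -(n : ℂ)) (hγ₂ : ∀ n : ℕ, γ₂ ≠ -(n : ℂ))
    (hB : 1 < B) (hBA : B < A) (hA : A < 2 * B - 1) :
    (A : ℂ) ^ (-α) *
      appellF2 α β₁ β₂ γ₁ γ₂ (1 / (A : ℂ)) (1 - (B : ℂ) / (A : ℂ)) =
    (B : ℂ) ^ (-α) *
      appellF2 α β₁ (γ₂ - β₂) γ₁ γ₂ (1 / (B : ℂ)) (1 - (A : ℂ) / (B : ℂ)) := by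
  have hA0 : (0:ℝ) < A := by linarith
  have hB0 : (0:ℝ) < B := by linarith
  set x₁ : ℝ := 1/A with hx₁
  set y : ℝ := 1 - B/A with hy
  set x₂ : ℝ := 1/B with hx₂
  set s : ℝ := 1 - A/B with hs
  have hy0 : 0 ≤ y := by
    rw [hy]
    have : B/A < 1 := (div_lt_one hA0).2 hBA
    linarith
  have hy2 : 2*y < 1 := by
    rw [hy]
    have : 1/2 < B/A := by
      rw [div_lt_div_iff₀ (by norm_num) hA0]
      linarith
    linarith
  have hsneg : s ≤ 0 := by
    rw [hs]
    have : 1 ≤ A/B := (one_le_div hB0).2 hBA.le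
    linarith
  have hsval : y / (y - 1) = s := by
    have hyn : y - 1 ≠ 0 := by
      rw [hy]
      have h1 : B/A > 0 := by positivity
      intro hcon
      have : B/A = 0 := by linarith [hcon]
      linarith
    rw [div_eq_iff hyn, hy, hs]
    field_simp
    ring
  have e₁ : 1/(A:ℂ) = ((x₁ : ℝ):ℂ) := by rw [hx₁]; push_cast; ring
  have e₂ : 1 - (B:ℂ)/(A:ℂ) = ((y : ℝ):ℂ) := by rw [hy]; push_cast; ring
  have e₃ : 1/(B:ℂ) = ((x₂ : ℝ):ℂ) := by rw [hx₂]; push_cast; ring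
  have e₄ : 1 - (A:ℂ)/(B:ℂ) = ((s : ℝ):ℂ) := by rw [hs]; push_cast; ring
  rw [e₁, e₂, e₃, e₄]
  have n₁ : ‖((x₁:ℝ):ℂ)‖ + ‖((y:ℝ):ℂ)‖ < 1 := by
    simp only [Complex.norm_real, Real.norm_eq_abs]
    rw [_root_.abs_of_nonneg (by rw [hx₁]; positivity), _root_.abs_of_nonneg hy0]
    have hsum : x₁ + y = (1 + A - B)/A := by rw [hx₁, hy]; field_simp; ring
    rw [hsum, div_lt_one hA0]
    linarith
  have n₂ : ‖((x₂:ℝ):ℂ)‖ + ‖((s:ℝ):ℂ)‖ < 1 := by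
    simp only [Complex.norm_real, Real.norm_eq_abs]
    rw [_root_.abs_of_nonneg (by rw [hx₂]; positivity), abs_of_nonpos hsneg]
    have hsum : x₂ + (-s) = (1 + A - B)/B := by rw [hx₂, hs]; field_simp; ring
    rw [hsum, div_lt_one hB0]
    linarith
  have S₁ := summable_F2term α β₁ β₂ hγ₁ hγ₂ n₁
  have S₂ := summable_F2term α β₁ (γ₂ - β₂) hγ₁ hγ₂ n₂
  have hfacts : ∀ m : ℕ, cpoch γ₁ m ≠ 0 ∧ ((m.factorial : ℕ):ℂ) ≠ 0 :=
    fun m => ⟨cpoch_ne_zero hγ₁ m, Nat.cast_ne_zero.2 (Nat.factorial_ne_zero m)⟩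
  have hscast : ((y/(y-1) : ℝ):ℂ) = ((s:ℝ):ℂ) := by rw [hsval]
  -- LHS decomposition
  rw [appellF2, appellF2, Summable.tsum_prod S₁, Summable.tsum_prod S₂]
  have hm₁ : ∀ m : ℕ, ∑' n : ℕ, (cpoch α (m + n) * cpoch β₁ m * cpoch β₂ n /
        (cpoch γ₁ m * cpoch γ₂ n * (m.factorial : ℂ) * (n.factorial : ℂ)) *
        ((x₁:ℝ):ℂ) ^ m * ((y:ℝ):ℂ) ^ n)
      = (cpoch α m * cpoch β₁ m / (cpoch γ₁ m * (m.factorial : ℂ)) * ((x₁:ℝ):ℂ)^m) *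
          ((1 - ((y:ℝ):ℂ))^(-(α + (m:ℂ))) *
            ∑' k : ℕ, cpoch (α + m) k * cpoch (γ₂ - β₂) k /
              (cpoch γ₂ k * (k.factorial : ℂ)) * ((s:ℝ):ℂ)^k) := by
    intro m
    have hfac : ∀ n : ℕ, (cpoch α (m + n) * cpoch β₁ m * cpoch β₂ n /
        (cpoch γ₁ m * cpoch γ₂ n * (m.factorial : ℂ) * (n.factorial : ℂ)) *
        ((x₁:ℝ):ℂ) ^ m * ((y:ℝ):ℂ) ^ n)
        = (cpoch α m * cpoch β₁ m / (cpoch γ₁ m * (m.factorial : ℂ)) * ((x₁:ℝ):ℂ)^m) *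
          (cpoch (α + m) n * cpoch β₂ n / (cpoch γ₂ n * (n.factorial : ℂ)) * ((y:ℝ):ℂ)^n) := by
      intro n
      rw [cpoch_add]
      obtain ⟨hg1, hf1⟩ := hfacts m
      have hg2 := cpoch_ne_zero hγ₂ n
      have hf2 : ((n.factorial : ℕ):ℂ) ≠ 0 := Nat.cast_ne_zero.2 (Nat.factorial_ne_zero n)
      field_simp
    rw [tsum_congr hfac, tsum_mul_left, pfaff (α + m) β₂ hγ₂ hy0 hy2]
    rw [hscast]
  have hm₂ : ∀ m : ℕ, ∑' k : ℕ, (cpoch α (m + k) * cpoch β₁ m * cpoch (γ₂ - β₂) k /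
        (cpoch γ₁ m * cpoch γ₂ k * (m.factorial : ℂ) * (k.factorial : ℂ)) *
        ((x₂:ℝ):ℂ) ^ m * ((s:ℝ):ℂ) ^ k)
      = (cpoch α m * cpoch β₁ m / (cpoch γ₁ m * (m.factorial : ℂ)) * ((x₂:ℝ):ℂ)^m) *
          ∑' k : ℕ, cpoch (α + m) k * cpoch (γ₂ - β₂) k /
            (cpoch γ₂ k * (k.factorial : ℂ)) * ((s:ℝ):ℂ)^k := by
    intro m
    rw [← tsum_mul_left]
    apply tsum_congr
    intro k
    rw [cpoch_add]
    obtain ⟨hg1, hf1⟩ := hfacts m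
    have hg2 := cpoch_ne_zero hγ₂ k
    have hf2 : ((k.factorial : ℕ):ℂ) ≠ 0 := Nat.cast_ne_zero.2 (Nat.factorial_ne_zero k)
    field_simp
  rw [tsum_congr hm₁, tsum_congr hm₂, ← tsum_mul_left, ← tsum_mul_left]
  apply tsum_congr
  intro m
  have hby : (1 - ((y:ℝ):ℂ)) = ((B/A : ℝ):ℂ) := by rw [hy]; push_cast; ring
  have key := cpow_fact hA0 hB0 α m
  rw [hby, hx₁, hx₂] at *
  linear_combination (cpoch α m * cpoch β₁ m / (cpoch γ₁ m * (m.factorial : ℂ)) *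
    ∑' k : ℕ, cpoch (α + m) k * cpoch (γ₂ - β₂) k /
      (cpoch γ₂ k * (k.factorial : ℂ)) * ((s:ℝ):ℂ)^k) * key
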